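/- Let G = (A, B, E) be a bipartite graph with |A| = n, let S be a semi-matching of G admitting no length-2 degree-minimizing path, and let S* be an optimal semi-matching of G. Then the maximal degree of S is at most ⌈log₂(n+1)⌉ times the maximal degree of S*. -/

import Mathlib

open Finset

variable {α β : Type*} [Fintype α] [Fintype β] [DecidableEq α] [DecidableEq β]

/-- Degree of a vertex `b ∈ B` with respect to an edge set `S`. -/
def degB (S : Finset (α × β)) (b : β) : ℕ := (S.filter fun e => e.2 = b).card

/-- Degree of a vertex `a ∈ A` with respect to an edge set `S`. -/
def degA (S : Finset (α × β)) (a : α) : ℕ := (S.filter fun e => e.1 = a).card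

/-- Maximal degree of a vertex with respect to an edge set `S`. -/
def maxDeg (S : Finset (α × β)) : ℕ :=
  max (Finset.univ.sup (degA S)) (Finset.univ.sup (degB S))

/-- `S` is a semi-matching of `A'` into `B` using edges of `E`. -/
def IsSemi (A' : Finset α) (E S : Finset (α × β)) : Prop :=
  S ⊆ E ∧ (∀ e ∈ S, e.1 ∈ A') ∧ ∀ a ∈ A', degA S a = 1

/-- An optimal semi-matching of `A'` into `B` using edges of `E`:
a semi-matching minimizing the maximal degree. -/
def IsOptSemi (A' : Finset α) (E S : Finset (α × β)) : Prop :=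
  IsSemi A' E S ∧ ∀ T, IsSemi A' E T → maxDeg S ≤ maxDeg T

/-- Neighborhood of a set `X ⊆ A` of vertices with respect to an edge set `E`. -/
def nbr (E : Finset (α × β)) (X : Finset α) : Finset β :=
  Finset.univ.filter fun b => ∃ a ∈ X, (a, b) ∈ E

/-- A degree-minimizing path `(b 0, a 0, b 1, a 1, …, b k)` with respect to a
semi-matching `S` in the graph with edge set `E`: each `a i` is matched to `b i` in `S`,
each `(a i, b (i+1))` is a non-matching edge of `E`, the `S`-degrees of the `b i` are
non-increasing along the path, and the total degree drop is at least `2`. -/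
def IsDegMinPath (E S : Finset (α × β)) {k : ℕ} (a : Fin k → α) (b : Fin (k + 1) → β) :
    Prop :=
  0 < k ∧ Function.Injective a ∧ Function.Injective b ∧
  (∀ i : Fin k, (a i, b i.castSucc) ∈ S) ∧
  (∀ i : Fin k, (a i, b i.succ) ∈ E ∧ (a i, b i.succ) ∉ S) ∧
  (∀ i : Fin k, degB S (b i.succ) ≤ degB S (b i.castSucc)) ∧
  degB S (b (Fin.last k)) + 2 ≤ degB S (b 0)

/-- `S` admits no degree-minimizing path (of any length) in `E`. -/
def NoDegMinPath (E S : Finset (α × β)) : Prop :=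
  ∀ (k : ℕ) (a : Fin k → α) (b : Fin (k + 1) → β), ¬ IsDegMinPath E S a b

/-- `S` admits no length-2 degree-minimizing path `(b', a, b)` in `E`, i.e. there is no
`a` matched in `S` to `b'` with a non-matching edge `(a, b) ∈ E` and
`deg_S(b') > deg_S(b) + 1`. -/
def NoLen2DegMinPath (E S : Finset (α × β)) : Prop :=
  ¬ ∃ (a : α) (b b' : β), (a, b') ∈ S ∧ (a, b) ∈ E ∧ (a, b) ∉ S ∧
      degB S b + 1 < degB S b'

/-- A semi-matching with no length-2 degree-minimizing path is a `⌈log₂(n+1)⌉`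
approximation of an optimal semi-matching, where `n = |A|`. -/
theorem semi2_log_approximation (E S Sstar : Finset (α × β)) (n : ℕ)
    (hn : n = Fintype.card α)
    (hS : IsSemi Finset.univ E S) (hno : NoLen2DegMinPath E S)
    (hSstar : IsOptSemi Finset.univ E Sstar) :
    maxDeg S ≤ Nat.clog 2 (n + 1) * maxDeg Sstar := by
  classical
  obtain ⟨hSE, -, hSdeg⟩ := hS
  obtain ⟨⟨hTE, -, hTdeg⟩, -⟩ := hSstar
  set dstar := maxDeg Sstar with hdstar
  set L := Nat.clog 2 (n + 1) with hLdef
  -- |S| = n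
  have hcardS : S.card = n := by
    rw [hn, Finset.card_eq_sum_card_fiberwise
      (f := Prod.fst) (t := (univ : Finset α)) (fun e _ => mem_univ _)]
    calc (∑ a : α, (S.filter fun e => e.1 = a).card) = ∑ a : α, 1 :=
          Finset.sum_congr rfl (fun a _ => hSdeg a (mem_univ a))
      _ = Fintype.card α := by simp
  rcases Nat.eq_zero_or_pos n with h0 | hnpos
  · -- n = 0 : S is empty
    have hSempty : S = ∅ := Finset.card_eq_zero.mp (by rw [hcardS, h0])
    subst hSempty
    simp [maxDeg, degA, degB]
  have haex : Nonempty α := by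
    rw [hn] at hnpos; exact Fintype.card_pos_iff.mp hnpos
  obtain ⟨a0⟩ := haex
  have hdstar1 : 1 ≤ dstar := by
    have h1 : 1 ≤ univ.sup (degA Sstar) := by
      rw [← hTdeg a0 (mem_univ a0)]
      exact Finset.le_sup (mem_univ a0)
    exact le_trans h1 (le_max_left _ _)
  have hL1 : 1 ≤ L := Nat.clog_pos (by norm_num) (by omega)
  -- the unique S-partner
  have huniq : ∀ a b b', (a, b) ∈ S → (a, b') ∈ S → b = b' := by
    intro a b b' h1 h2
    have hd1 : (S.filter fun e => e.1 = a).card ≤ 1 := le_of_eq (hSdeg a (mem_univ a))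
    have hm1 : ((a, b) : α × β) ∈ S.filter fun e => e.1 = a := by
      simp [Finset.mem_filter, h1]
    have hm2 : ((a, b') : α × β) ∈ S.filter fun e => e.1 = a := by
      simp [Finset.mem_filter, h2]
    have := Finset.card_le_one.mp hd1 _ hm1 _ hm2
    exact congrArg Prod.snd this
  have hdB : ∀ b, degB Sstar b ≤ dstar :=
    fun b => le_trans (Finset.le_sup (mem_univ b)) (le_max_right _ _)
  -- Lemma A : j * |T_j| ≤ |S_j|
  have lemA : ∀ j : ℕ, j * (univ.filter fun b => j ≤ degB S b).card ≤
      (S.filter fun e => j ≤ degB S e.2).card := by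
    intro j
    have h1 : (S.filter fun e => j ≤ degB S e.2).card =
        ∑ b : β, ((S.filter fun e => j ≤ degB S e.2).filter fun e => e.2 = b).card :=
      Finset.card_eq_sum_card_fiberwise (fun e _ => mem_univ _)
    have h2 : ∀ b ∈ univ.filter (fun b => j ≤ degB S b),
        j ≤ ((S.filter fun e => j ≤ degB S e.2).filter fun e => e.2 = b).card := by
      intro b hb
      rw [Finset.mem_filter] at hb
      refine le_trans hb.2 ?_
      rw [degB]
      apply Finset.card_le_card
      intro e he
      rw [Finset.mem_filter] at he
      rw [Finset.mem_filter, Finset.mem_filter]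
      refine ⟨⟨he.1, ?_⟩, he.2⟩
      rw [he.2]
      exact hb.2
    calc j * (univ.filter fun b => j ≤ degB S b).card
        = ∑ _b ∈ univ.filter (fun b => j ≤ degB S b), j := by
          rw [Finset.sum_const, smul_eq_mul, mul_comm]
      _ ≤ ∑ b ∈ univ.filter (fun b => j ≤ degB S b),
            ((S.filter fun e => j ≤ degB S e.2).filter fun e => e.2 = b).card :=
          Finset.sum_le_sum h2
      _ ≤ ∑ b : β, ((S.filter fun e => j ≤ degB S e.2).filter fun e => e.2 = b).card :=
          Finset.sum_le_sum_of_subset (Finset.filter_subset _ _)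
      _ = _ := h1.symm
  -- Lemma B : |S_{j+1}| ≤ dstar * |T_j|
  have lemB : ∀ j : ℕ, (S.filter fun e => j + 1 ≤ degB S e.2).card ≤
      dstar * (univ.filter fun b => j ≤ degB S b).card := by
    intro j
    set R := Sstar.filter (fun e => ∃ b, (e.1, b) ∈ S ∧ j + 1 ≤ degB S b) with hR
    have step1 : (S.filter fun e => j + 1 ≤ degB S e.2).card ≤ R.card := by
      rw [Finset.card_eq_sum_card_fiberwise
        (f := Prod.fst) (t := (univ : Finset α)) (s := S.filter fun e => j + 1 ≤ degB S e.2)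
        (fun e _ => mem_univ _),
        Finset.card_eq_sum_card_fiberwise
        (f := Prod.fst) (t := (univ : Finset α)) (s := R) (fun e _ => mem_univ _)]
      apply Finset.sum_le_sum
      intro a _
      by_cases hcase :
          ((S.filter fun e => j + 1 ≤ degB S e.2).filter fun e => e.1 = a).Nonempty
      · obtain ⟨e, he⟩ := hcase
        rw [Finset.mem_filter, Finset.mem_filter] at he
        obtain ⟨⟨heS, hedeg⟩, hea⟩ := he
        have hLHS : ((S.filter fun e => j + 1 ≤ degB S e.2).filter fun e => e.1 = a).card
            ≤ 1 := by
          rw [← hSdeg a (mem_univ a), degA]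
          apply Finset.card_le_card
          intro e' he'
          rw [Finset.mem_filter, Finset.mem_filter] at he'
          rw [Finset.mem_filter]
          exact ⟨he'.1.1, he'.2⟩
        have heab : ((a, e.2) : α × β) ∈ S := by
          have : ((a, e.2) : α × β) = e := Prod.ext hea.symm rfl
          rw [this]; exact heS
        have hsub : Sstar.filter (fun e => e.1 = a) ⊆ R.filter fun e => e.1 = a := by
          intro e' he'
          rw [Finset.mem_filter] at he'
          rw [Finset.mem_filter, hR, Finset.mem_filter]
          exact ⟨⟨he'.1, ⟨e.2, by rw [he'.2]; exact heab, hedeg⟩⟩, he'.2⟩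
        have hRHS : 1 ≤ (R.filter fun e => e.1 = a).card := by
          have h1 : (1 : ℕ) = degA Sstar a := (hTdeg a (mem_univ a)).symm
          rw [h1, degA]
          exact Finset.card_le_card hsub
        exact le_trans hLHS hRHS
      · rw [Finset.not_nonempty_iff_eq_empty] at hcase
        simp only [hcase, Finset.card_empty, Nat.zero_le]
    have step2 : R.card ≤ dstar * (univ.filter fun b => j ≤ degB S b).card := by
      have hr : R.card = ∑ b : β, (R.filter fun e => e.2 = b).card :=
        Finset.card_eq_sum_card_fiberwise (fun e _ => mem_univ _)
      have hzero : ∀ b ∈ (univ : Finset β), b ∉ univ.filter (fun b => j ≤ degB S b) →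
          (R.filter fun e => e.2 = b).card = 0 := by
        intro b _ hb
        rw [Finset.mem_filter, not_and] at hb
        have hblt : degB S b < j := by
          by_contra h
          exact hb (mem_univ b) (le_of_not_gt h)
        rw [Finset.card_eq_zero, Finset.eq_empty_iff_forall_notMem]
        intro e he
        rw [Finset.mem_filter, hR, Finset.mem_filter] at he
        obtain ⟨⟨heT, b', hb'S, hb'deg⟩, heb⟩ := he
        have heE : ((e.1, b) : α × β) ∈ E := by
          have : ((e.1, b) : α × β) = e := Prod.ext rfl heb.symm
          rw [this]; exact hTE heT
        by_cases hmem : ((e.1, b) : α × β) ∈ S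
        · have hbb : b = b' := huniq e.1 b b' hmem hb'S
          rw [hbb] at hblt
          omega
        · exact hno ⟨e.1, b, b', hb'S, heE, hmem, by omega⟩
      have hr2 : R.card = ∑ b ∈ univ.filter (fun b => j ≤ degB S b),
          (R.filter fun e => e.2 = b).card := by
        rw [hr]
        exact (Finset.sum_subset (Finset.subset_univ _)
          (fun b hb hb' => hzero b hb hb')).symm
      rw [hr2]
      calc (∑ b ∈ univ.filter (fun b => j ≤ degB S b), (R.filter fun e => e.2 = b).card)
          ≤ ∑ _b ∈ univ.filter (fun b => j ≤ degB S b), dstar := by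
            apply Finset.sum_le_sum
            intro b _
            refine le_trans ?_ (hdB b)
            rw [degB]
            apply Finset.card_le_card
            intro e he
            rw [Finset.mem_filter, hR, Finset.mem_filter] at he
            rw [Finset.mem_filter]
            exact ⟨he.1.1, he.2⟩
        _ = dstar * (univ.filter fun b => j ≤ degB S b).card := by
            rw [Finset.sum_const, smul_eq_mul, mul_comm]
    exact le_trans step1 step2
  -- doubling
  have doubling : ∀ j : ℕ, 2 * dstar ≤ j + 1 →
      (univ.filter fun b => j + 1 ≤ degB S b).card * 2 ≤
      (univ.filter fun b => j ≤ degB S b).card := by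
    intro j hj
    have h1 := le_trans (lemA (j + 1)) (lemB j)
    have h2 : 2 * dstar * (univ.filter fun b => j + 1 ≤ degB S b).card ≤
        dstar * (univ.filter fun b => j ≤ degB S b).card :=
      le_trans (Nat.mul_le_mul_right _ hj) h1
    have h3 : dstar * ((univ.filter fun b => j + 1 ≤ degB S b).card * 2) ≤
        dstar * (univ.filter fun b => j ≤ degB S b).card := by
      refine le_trans (le_of_eq ?_) h2
      ring
    exact Nat.le_of_mul_le_mul_left h3 hdstar1
  set d := univ.sup (degB S) with hd
  have hsupA : univ.sup (degA S) ≤ 1 :=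
    Finset.sup_le fun a _ => le_of_eq (hSdeg a (mem_univ a))
  have hmax : maxDeg S ≤ max 1 d := max_le_max hsupA le_rfl
  rcases le_or_gt d 1 with hd1 | hd2
  · have h1 : maxDeg S ≤ 1 := le_trans hmax (by omega)
    have h2 : 1 ≤ L * dstar := Nat.one_le_iff_ne_zero.mpr (by positivity)
    omega
  · -- d ≥ 2
    have hdn : d ≤ n := by
      rw [hd]
      refine Finset.sup_le fun b _ => ?_
      rw [degB, ← hcardS]
      exact Finset.card_le_card (Finset.filter_subset _ _)
    have hn2 : 2 ≤ n := le_trans hd2 hdn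
    have hL2 : 2 ≤ L := by
      have : (1 : ℕ) < Nat.clog 2 (n + 1) :=
        (Nat.lt_clog_iff_pow_lt (b := 2) (by norm_num)).mpr (by omega)
      omega
    have hlogL : Nat.log 2 n + 1 = L := by
      apply le_antisymm
      · by_contra hcon
        push_neg at hcon
        have h1 : n + 1 ≤ 2 ^ L := by rw [hLdef]; exact Nat.le_pow_clog (b := 2) (by norm_num) (n + 1)
        have h3 : 2 ^ L ≤ 2 ^ Nat.log 2 n := Nat.pow_le_pow_right (by norm_num) (by omega)
        have h4 : 2 ^ Nat.log 2 n ≤ n := Nat.pow_log_le_self 2 (by omega)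
        omega
      · rw [hLdef]
        refine (Nat.clog_le_iff_le_pow (b := 2) (by norm_num)).mpr ?_
        have h5 : n < 2 ^ (Nat.log 2 n + 1) := by
          have := Nat.lt_pow_succ_log_self (b := 2) (by norm_num) n
          simpa [Nat.succ_eq_add_one] using this
        omega
    suffices hdle : d ≤ L * dstar by
      refine le_trans hmax ?_
      rw [max_eq_right (by omega : 1 ≤ d)]
      exact hdle
    rcases le_or_gt (2 * dstar) d with hcase | hcase
    · -- doubling chain
      have hbne : (univ : Finset β).Nonempty := by
        by_contra h
        rw [Finset.not_nonempty_iff_eq_empty] at h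
        rw [hd, h] at hd2
        simp at hd2
      have base : 1 ≤ (univ.filter fun b => d ≤ degB S b).card := by
        obtain ⟨b, -, hb⟩ := Finset.exists_mem_eq_sup univ hbne (degB S)
        refine Finset.card_pos.mpr ⟨b, ?_⟩
        rw [Finset.mem_filter]
        exact ⟨mem_univ b, le_of_eq (hd.trans hb)⟩
      have pow : ∀ t : ℕ, 2 * dstar + t ≤ d →
          2 ^ t ≤ (univ.filter fun b => d - t ≤ degB S b).card := by
        intro t
        induction t with
        | zero => intro _; simpa using base
        | succ t ih =>
          intro ht
          have h1 : 2 ^ t ≤ (univ.filter fun b => d - t ≤ degB S b).card := ih (by omega)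
          have h2 := doubling (d - t - 1) (by omega)
          rw [show d - t - 1 + 1 = d - t by omega] at h2
          calc 2 ^ (t + 1) = 2 ^ t * 2 := by ring
            _ ≤ (univ.filter fun b => d - t ≤ degB S b).card * 2 :=
                Nat.mul_le_mul_right _ h1
            _ ≤ (univ.filter fun b => d - t - 1 ≤ degB S b).card := h2
            _ = (univ.filter fun b => d - (t + 1) ≤ degB S b).card := by
                rw [show d - (t + 1) = d - t - 1 by omega]
      have key : 2 * dstar * 2 ^ (d - 2 * dstar) ≤ n := by
        have h1 := pow (d - 2 * dstar) (by omega)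
        rw [show d - (d - 2 * dstar) = 2 * dstar by omega] at h1
        have h2 := lemA (2 * dstar)
        have h3 : (S.filter fun e => 2 * dstar ≤ degB S e.2).card ≤ n := by
          rw [← hcardS]
          exact Finset.card_le_card (Finset.filter_subset _ _)
        calc 2 * dstar * 2 ^ (d - 2 * dstar)
            ≤ 2 * dstar * (univ.filter fun b => 2 * dstar ≤ degB S b).card :=
              Nat.mul_le_mul_left _ h1
          _ ≤ n := le_trans h2 h3
      have hpow2 : 2 ^ (d - 2 * dstar + 1) ≤ n := by
        calc 2 ^ (d - 2 * dstar + 1) = 2 * 2 ^ (d - 2 * dstar) := by ring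
          _ ≤ 2 * dstar * 2 ^ (d - 2 * dstar) :=
              Nat.mul_le_mul_right _ (by omega)
          _ ≤ n := key
      have hlog : d - 2 * dstar + 1 ≤ Nat.log 2 n :=
        (Nat.le_log_iff_pow_le (by norm_num) (by omega)).mpr hpow2
      -- d + 2 ≤ 2*dstar + L ; want d ≤ L * dstar
      have hfin : d + 2 ≤ 2 * dstar + L := by omega
      nlinarith [hfin, hL2, hdstar1]
    · -- d < 2 * dstar
      nlinarith [hcase, hL2, hdstar1]
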